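/- arXiv:1108.4953 — 3 statements merged into one kernel-verified Lean document; each statement's English description precedes it below -/
import Mathlib

section
/- For every graph G and every positive integer r, the Hadwiger number of the complete blow-up satisfies h(G[r]) = r · h_r(G). -/
open Finset

/-- Any two members of a bramble either share a vertex or are joined by an edge,
and each member induces a connected subgraph. -/
def IsBramble {V : Type} (G : SimpleGraph V) (B : Finset (Finset V)) : Prop :=
  (∀ A ∈ B, (G.induce (A : Set V)).Connected) ∧
    ∀ A ∈ B, ∀ A' ∈ B, (∃ v, v ∈ A ∧ v ∈ A') ∨ ∃ a ∈ A, ∃ b ∈ A', G.Adj a b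

/-- A strong bramble: any two (possibly equal) members are joined by an edge. -/
def IsStrongBramble {V : Type} (G : SimpleGraph V) (B : Finset (Finset V)) : Prop :=
  (∀ A ∈ B, (G.induce (A : Set V)).Connected) ∧
    ∀ A ∈ B, ∀ A' ∈ B, ∃ a ∈ A, ∃ b ∈ A', G.Adj a b

/-- A valid weighting: nonnegative weights whose total at every vertex is at most 1. -/
def IsValidWeight {V : Type} [DecidableEq V] (B : Finset (Finset V)) (w : Finset V → ℝ) : Prop :=
  (∀ A ∈ B, 0 ≤ w A) ∧ ∀ v : V, ∑ A ∈ B.filter (fun A => v ∈ A), w A ≤ 1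

/-- The fractional Hadwiger number. -/
noncomputable def fracHadwiger {V : Type} [Fintype V] [DecidableEq V] (G : SimpleGraph V) : ℝ :=
  sSup {h : ℝ | ∃ B : Finset (Finset V), ∃ w : Finset V → ℝ,
    IsBramble G B ∧ IsValidWeight B w ∧ h = ∑ A ∈ B, w A}

/-- The r-integral Hadwiger number: all weights multiples of 1/r. -/
noncomputable def rIntHadwiger {V : Type} [Fintype V] [DecidableEq V]
    (G : SimpleGraph V) (r : ℕ) : ℝ :=
  sSup {h : ℝ | ∃ B : Finset (Finset V), ∃ w : Finset V → ℝ,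
    IsBramble G B ∧ IsValidWeight B w ∧ (∀ A ∈ B, ∃ k : ℕ, w A = k / r) ∧
    h = ∑ A ∈ B, w A}

/-- The lower fractional Hadwiger number (using strong brambles). -/
noncomputable def lowerFracHadwiger {V : Type} [Fintype V] [DecidableEq V]
    (G : SimpleGraph V) : ℝ :=
  sSup {h : ℝ | ∃ B : Finset (Finset V), ∃ w : Finset V → ℝ,
    IsStrongBramble G B ∧ IsValidWeight B w ∧ h = ∑ A ∈ B, w A}

/-- The lower r-integral Hadwiger number. -/
noncomputable def lowerRIntHadwiger {V : Type} [Fintype V] [DecidableEq V]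
    (G : SimpleGraph V) (r : ℕ) : ℝ :=
  sSup {h : ℝ | ∃ B : Finset (Finset V), ∃ w : Finset V → ℝ,
    IsStrongBramble G B ∧ IsValidWeight B w ∧ (∀ A ∈ B, ∃ k : ℕ, w A = k / r) ∧
    h = ∑ A ∈ B, w A}

/-- `G` has a clique minor of order `t`. -/
def HasCliqueMinor {V : Type} (G : SimpleGraph V) (t : ℕ) : Prop :=
  ∃ f : Fin t → Finset V,
    (∀ i, (f i).Nonempty) ∧
    (∀ i, (G.induce ((f i : Set V))).Connected) ∧
    (∀ i j, i ≠ j → Disjoint (f i) (f j)) ∧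
    (∀ i j, i ≠ j → ∃ a ∈ f i, ∃ b ∈ f j, G.Adj a b)

/-- `G` has a clique minor of order `t` and breadth at most `d` (each part has ≤ d vertices). -/
def HasCliqueMinorBreadth {V : Type} (G : SimpleGraph V) (t : ℕ) (d : ℝ) : Prop :=
  ∃ f : Fin t → Finset V,
    (∀ i, (f i).Nonempty) ∧
    (∀ i, (G.induce ((f i : Set V))).Connected) ∧
    (∀ i j, i ≠ j → Disjoint (f i) (f j)) ∧
    (∀ i j, i ≠ j → ∃ a ∈ f i, ∃ b ∈ f j, G.Adj a b) ∧
    (∀ i, ((f i).card : ℝ) ≤ d)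

/-- The Hadwiger number: the largest order of a clique minor. -/
noncomputable def hadwigerNumber {V : Type} (G : SimpleGraph V) : ℕ :=
  sSup {t : ℕ | HasCliqueMinor G t}

/-- The lexicographic product of two graphs. -/
def lexProd {α β : Type} (G : SimpleGraph α) (H : SimpleGraph β) : SimpleGraph (α × β) where
  Adj x y := G.Adj x.1 y.1 ∨ (x.1 = y.1 ∧ H.Adj x.2 y.2)
  symm := by
    constructor
    intro x y hxy
    rcases hxy with h | ⟨h1, h2⟩
    · exact Or.inl h.symm
    · exact Or.inr ⟨h1.symm, h2.symm⟩
  loopless := by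
    constructor
    intro x hx
    rcases hx with h | ⟨_, h2⟩
    · exact G.irrefl h
    · exact H.irrefl h2

/-- The complete blow-up `G[r] = G · K_r`. -/
def completeBlowup {α : Type} (G : SimpleGraph α) (r : ℕ) : SimpleGraph (α × Fin r) :=
  lexProd G (⊤ : SimpleGraph (Fin r))

/-- The blow-up `G(r) = G · I_r`. -/
def emptyBlowup {α : Type} (G : SimpleGraph α) (r : ℕ) : SimpleGraph (α × Fin r) :=
  lexProd G (⊥ : SimpleGraph (Fin r))

/-- `H` is a minor of `G`: branch sets indexed by the vertices of `H`. -/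
def IsMinor {W V : Type} (H : SimpleGraph W) (G : SimpleGraph V) : Prop :=
  ∃ f : W → Finset V,
    (∀ u, (G.induce ((f u : Set V))).Connected) ∧
    (∀ u u', u ≠ u' → Disjoint (f u) (f u')) ∧
    (∀ u u', H.Adj u u' → ∃ a ∈ f u, ∃ b ∈ f u', G.Adj a b)

/-- The k × k grid graph. -/
def gridGraph (k : ℕ) : SimpleGraph (Fin k × Fin k) where
  Adj a b := (a.1 = b.1 ∧ (a.2.val + 1 = b.2.val ∨ b.2.val + 1 = a.2.val)) ∨
             (a.2 = b.2 ∧ (a.1.val + 1 = b.1.val ∨ b.1.val + 1 = a.1.val))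
  symm := by
    constructor
    intro a b hab
    rcases hab with ⟨h1, h2⟩ | ⟨h1, h2⟩
    · exact Or.inl ⟨h1.symm, h2.symm⟩
    · exact Or.inr ⟨h1.symm, h2.symm⟩
  loopless := by
    constructor
    intro a ha
    rcases ha with ⟨_, h | h⟩ | ⟨_, h | h⟩ <;> omega


section AuxBlowup
open SimpleGraph Function

lemma connected_of_map {α β : Type*} {H : SimpleGraph α} {H' : SimpleGraph β} (ψ : α → β)
    (hs : Surjective ψ)
    (hadj : ∀ a b, H.Adj a b → H'.Adj (ψ a) (ψ b) ∨ ψ a = ψ b)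
    (hc : H.Connected) : H'.Connected := by
  have hne : Nonempty β := Nonempty.map ψ hc.nonempty
  have key : ∀ {a a' : α} (w : H.Walk a a'), H'.Reachable (ψ a) (ψ a') := by
    intro a a' w
    induction w with
    | nil => exact .refl _
    | cons h _ ih =>
      rcases hadj _ _ h with h' | h'
      · exact (h'.reachable).trans ih
      · exact h' ▸ ih
  constructor
  intro b b'
  obtain ⟨a, rfl⟩ := hs b
  obtain ⟨a', rfl⟩ := hs b'
  obtain ⟨w⟩ := hc.preconnected a a'
  exact key w

lemma completeBlowup_adj {α : Type} (G : SimpleGraph α) (r : ℕ) (x y : α × Fin r) :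
    (completeBlowup G r).Adj x y ↔ G.Adj x.1 y.1 ∨ (x.1 = y.1 ∧ x.2 ≠ y.2) := by
  simp [completeBlowup, lexProd]

lemma blowup_minor_to_bramble {V : Type} [Fintype V] [DecidableEq V] (G : SimpleGraph V)
    (r t : ℕ) (hr : 0 < r) (h : HasCliqueMinor (completeBlowup G r) t) :
    ∃ B : Finset (Finset V), ∃ w : Finset V → ℝ, IsBramble G B ∧ IsValidWeight B w ∧
      (∀ A ∈ B, ∃ k : ℕ, w A = k / r) ∧ (t : ℝ) = r * ∑ A ∈ B, w A := by
  classical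
  obtain ⟨f, hne, hconn, hdisj, hedge⟩ := h
  set P : Fin t → Finset V := fun i => (f i).image Prod.fst with hP
  have hPmem : ∀ i v, v ∈ P i ↔ ∃ c, (v, c) ∈ f i := by
    intro i v
    simp only [hP, Finset.mem_image, Prod.exists]
    constructor
    · rintro ⟨a, b, hab, rfl⟩; exact ⟨b, hab⟩
    · rintro ⟨c, hc⟩; exact ⟨v, c, hc, rfl⟩
  refine ⟨Finset.univ.image P,
    fun A => (((Finset.univ.filter fun i => P i = A).card : ℝ))/r, ?_, ?_, ?_, ?_⟩
  · constructor
    · intro A hA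
      obtain ⟨i, -, rfl⟩ := Finset.mem_image.mp hA
      refine connected_of_map
        (fun x : (f i : Set (V × Fin r)) =>
          (⟨x.1.1, Finset.mem_coe.mpr ((hPmem i x.1.1).mpr ⟨x.1.2, Finset.mem_coe.mp x.2⟩)⟩
            : (P i : Set V))) ?_ ?_ (hconn i)
      · rintro ⟨v, hv⟩
        obtain ⟨c, hc⟩ := (hPmem i v).mp (Finset.mem_coe.mp hv)
        exact ⟨⟨(v, c), Finset.mem_coe.mpr hc⟩, rfl⟩
      · rintro ⟨a, ha⟩ ⟨b, hb⟩ hab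
        have : (completeBlowup G r).Adj a b := hab
        rcases (completeBlowup_adj G r a b).mp this with h' | ⟨h', -⟩
        · left; exact h'
        · right; exact Subtype.ext h'
    · intro A hA A' hA'
      obtain ⟨i, -, rfl⟩ := Finset.mem_image.mp hA
      obtain ⟨j, -, rfl⟩ := Finset.mem_image.mp hA'
      by_cases heq : P i = P j
      · left
        obtain ⟨a, ha⟩ := hne i
        exact ⟨a.1, (hPmem i a.1).mpr ⟨a.2, ha⟩, heq ▸ (hPmem i a.1).mpr ⟨a.2, ha⟩⟩
      · have hij : i ≠ j := fun hh => heq (by rw [hh])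
        obtain ⟨a, ha, b, hb, hab⟩ := hedge i j hij
        rcases (completeBlowup_adj G r a b).mp hab with h' | ⟨h', -⟩
        · right
          exact ⟨a.1, (hPmem i a.1).mpr ⟨a.2, ha⟩, b.1, (hPmem j b.1).mpr ⟨b.2, hb⟩, h'⟩
        · left
          exact ⟨a.1, (hPmem i a.1).mpr ⟨a.2, ha⟩, h' ▸ (hPmem j b.1).mpr ⟨b.2, hb⟩⟩
  · constructor
    · intro A hA; positivity
    · intro v
      have hfib : (Finset.univ.filter fun i => v ∈ P i).card
          = ∑ A ∈ (Finset.univ.image P).filter (fun A => v ∈ A),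
              ((Finset.univ.filter fun i => v ∈ P i).filter (fun i => P i = A)).card := by
        apply Finset.card_eq_sum_card_fiberwise
        intro i hi
        simp only [Finset.mem_coe, Finset.mem_filter, Finset.mem_univ, true_and] at hi ⊢
        exact ⟨Finset.mem_image_of_mem P (Finset.mem_univ i), hi⟩
      have hfib2 : ∀ A ∈ (Finset.univ.image P).filter (fun A => v ∈ A),
          ((Finset.univ.filter fun i => v ∈ P i).filter (fun i => P i = A))
            = Finset.univ.filter (fun i => P i = A) := by
        intro A hA
        simp only [Finset.mem_filter] at hA
        ext i
        simp only [Finset.filter_filter, Finset.mem_filter, Finset.mem_univ, true_and]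
        constructor
        · rintro ⟨-, h2⟩; exact h2
        · rintro rfl; exact ⟨hA.2, rfl⟩
      have hbound : (Finset.univ.filter fun i => v ∈ P i).card ≤ r := by
        have : (Finset.univ.filter fun i => v ∈ P i).card ≤ (Finset.univ : Finset (Fin r)).card := by
          apply Finset.card_le_card_of_injOn
            (fun i => if h : ∃ c, (v, c) ∈ f i then h.choose else ⟨0, hr⟩)
          · intro a _; exact Finset.mem_univ _
          · intro i hi j hj hgij
            simp only [Finset.coe_filter, Set.mem_setOf_eq, Finset.mem_univ, true_and] at hi hj
            have hie := (hPmem i v).mp hi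
            have hje := (hPmem j v).mp hj
            simp only [dif_pos hie, dif_pos hje] at hgij
            by_contra hne'
            have := hdisj i j hne'
            exact (Finset.disjoint_left.mp this hie.choose_spec) (hgij ▸ hje.choose_spec)
        simpa using this
      rw [← Finset.sum_div]
      rw [div_le_one (by positivity)]
      calc ∑ A ∈ (Finset.univ.image P).filter (fun A => v ∈ A),
            (((Finset.univ.filter fun i => P i = A).card : ℝ))
          = (((Finset.univ.filter fun i => v ∈ P i).card : ℕ) : ℝ) := by
            rw [hfib]; push_cast
            apply Finset.sum_congr rfl
            intro A hA
            rw [hfib2 A hA]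
        _ ≤ r := by exact_mod_cast hbound
  · intro A hA; exact ⟨_, rfl⟩
  · have htot : t = ∑ A ∈ Finset.univ.image P, (Finset.univ.filter fun i => P i = A).card := by
      have := Finset.card_eq_sum_card_fiberwise
        (fun i (_ : i ∈ (Finset.univ : Finset (Fin t))) => Finset.mem_image_of_mem P (Finset.mem_univ i))
      simpa using this
    rw [← Finset.sum_div, mul_div_cancel₀]
    · exact_mod_cast htot
    · exact_mod_cast hr.ne'

lemma bramble_to_blowup_minor {V : Type} [Fintype V] [DecidableEq V] (G : SimpleGraph V)
    (r : ℕ) (hr : 0 < r) (B : Finset (Finset V)) (w : Finset V → ℝ)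
    (hB : IsBramble G B) (hw : IsValidWeight B w)
    (hmul : ∀ A ∈ B, ∃ k : ℕ, w A = k / r) :
    ∃ t : ℕ, HasCliqueMinor (completeBlowup G r) t ∧ (r : ℝ) * ∑ A ∈ B, w A = t := by
  classical
  set K : Finset V → ℕ := fun A => ⌊w A * r⌋₊ with hKdef
  have hK : ∀ A ∈ B, w A = K A / r := by
    intro A hA
    obtain ⟨k, hk⟩ := hmul A hA
    have hwr : w A * r = k := by
      rw [hk]; field_simp
    have : K A = k := by rw [hKdef]; simp [hwr]
    rw [this, ← hwr, hk]
    field_simp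
  set I : Finset (Σ _ : Finset V, ℕ) := B.sigma (fun A => Finset.range (K A)) with hIdef
  have hImem : ∀ p : (Σ _ : Finset V, ℕ), p ∈ I ↔ p.1 ∈ B ∧ p.2 < K p.1 := by
    intro p; rw [hIdef, Finset.mem_sigma]; simp
  set Iv : V → Finset (Σ _ : Finset V, ℕ) := fun v => I.filter (fun p => v ∈ p.1) with hIvdef
  have hIvcard : ∀ v, (Iv v).card ≤ r := by
    intro v
    have heq : Iv v = (B.filter (fun A => v ∈ A)).sigma (fun A => Finset.range (K A)) := by
      ext p
      rw [hIvdef, Finset.mem_filter, hImem p, Finset.mem_sigma, Finset.mem_filter]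
      simp only [Finset.mem_range]
      tauto
    have hc : ((Iv v).card : ℝ) = ∑ A ∈ B.filter (fun A => v ∈ A), ((K A : ℝ)) := by
      rw [heq, Finset.card_sigma]
      push_cast
      simp
    have hs : ∑ A ∈ B.filter (fun A => v ∈ A), ((K A : ℝ)) ≤ r := by
      have h1 : ∀ A ∈ B.filter (fun A => v ∈ A), (K A : ℝ) = r * w A := by
        intro A hA
        have hAB : A ∈ B := (Finset.mem_filter.mp hA).1
        rw [hK A hAB]
        field_simp
      rw [Finset.sum_congr rfl h1, ← Finset.mul_sum]
      calc (r : ℝ) * ∑ A ∈ B.filter (fun A => v ∈ A), w A ≤ (r : ℝ) * 1 := by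
            apply mul_le_mul_of_nonneg_left (hw.2 v) (by positivity)
        _ = r := mul_one _
    have := hc ▸ hs
    exact_mod_cast this
  set φ : V → (Σ _ : Finset V, ℕ) → Fin r :=
    fun v p => ⟨(Iv v).toList.idxOf p % r, Nat.mod_lt _ hr⟩ with hφdef
  have hφinj : ∀ v p q, p ∈ Iv v → q ∈ Iv v → φ v p = φ v q → p = q := by
    intro v p q hp hq hpq
    have hp' : p ∈ (Iv v).toList := Finset.mem_toList.mpr hp
    have hq' : q ∈ (Iv v).toList := Finset.mem_toList.mpr hq
    have hlen : (Iv v).toList.length = (Iv v).card := Finset.length_toList _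
    have hip : (Iv v).toList.idxOf p < r :=
      lt_of_lt_of_le (by rw [← hlen] at *; exact List.idxOf_lt_length_iff.mpr hp') (hlen ▸ hIvcard v)
    have hiq : (Iv v).toList.idxOf q < r :=
      lt_of_lt_of_le (by rw [← hlen] at *; exact List.idxOf_lt_length_iff.mpr hq') (hlen ▸ hIvcard v)
    have : (Iv v).toList.idxOf p = (Iv v).toList.idxOf q := by
      have := congrArg Fin.val hpq
      simpa [hφdef, Nat.mod_eq_of_lt hip, Nat.mod_eq_of_lt hiq] using this
    exact (List.idxOf_inj hp').mp this
  set F : (Σ _ : Finset V, ℕ) → Finset (V × Fin r) :=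
    fun p => p.1.image (fun v => (v, φ v p)) with hFdef
  have hFmem : ∀ p (x : V × Fin r), x ∈ F p ↔ ∃ v ∈ p.1, (v, φ v p) = x := by
    intro p x; rw [hFdef]; simp
  refine ⟨I.card, ⟨fun i => F (I.equivFin.symm i), ?_, ?_, ?_, ?_⟩, ?_⟩
  · intro i
    set p := (I.equivFin.symm i : Σ _ : Finset V, ℕ)
    have hp : p ∈ I := (I.equivFin.symm i).2
    have hA : p.1 ∈ B := ((hImem p).mp hp).1
    obtain ⟨⟨v, hv⟩⟩ := (hB.1 p.1 hA).nonempty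
    exact ⟨(v, φ v p), Finset.mem_image_of_mem _ (Finset.mem_coe.mp hv)⟩
  · intro i
    set p := (I.equivFin.symm i : Σ _ : Finset V, ℕ)
    have hp : p ∈ I := (I.equivFin.symm i).2
    have hA : p.1 ∈ B := ((hImem p).mp hp).1
    refine connected_of_map
      (fun x : (p.1 : Set V) =>
        (⟨(x.1, φ x.1 p), Finset.mem_coe.mpr (Finset.mem_image_of_mem _ (Finset.mem_coe.mp x.2))⟩
          : (F p : Set (V × Fin r)))) ?_ ?_ (hB.1 p.1 hA)
    · rintro ⟨x, hx⟩
      obtain ⟨v, hv, hvx⟩ := (hFmem p x).mp (Finset.mem_coe.mp hx)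
      exact ⟨⟨v, Finset.mem_coe.mpr hv⟩, Subtype.ext hvx⟩
    · rintro ⟨a, ha⟩ ⟨b, hb⟩ hab
      left
      exact (completeBlowup_adj G r _ _).mpr (Or.inl hab)
  · intro i j hij
    set p := (I.equivFin.symm i : Σ _ : Finset V, ℕ)
    set q := (I.equivFin.symm j : Σ _ : Finset V, ℕ)
    have hpq : p ≠ q := fun h =>
      hij (I.equivFin.symm.injective (Subtype.ext h))
    rw [Finset.disjoint_left]
    intro x hx hx'
    obtain ⟨v, hv, hvx⟩ := (hFmem p x).mp hx
    obtain ⟨v', hv', hvx'⟩ := (hFmem q x).mp hx'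
    have hvv : v = v' := by
      have := hvx.trans hvx'.symm
      exact congrArg Prod.fst this
    subst hvv
    have hφeq : φ v p = φ v q := by
      have := hvx.trans hvx'.symm
      exact congrArg Prod.snd this
    have hpIv : p ∈ Iv v := Finset.mem_filter.mpr ⟨(I.equivFin.symm i).2, hv⟩
    have hqIv : q ∈ Iv v := Finset.mem_filter.mpr ⟨(I.equivFin.symm j).2, hv'⟩
    exact hpq (hφinj v p q hpIv hqIv hφeq)
  · intro i j hij
    set p := (I.equivFin.symm i : Σ _ : Finset V, ℕ)
    set q := (I.equivFin.symm j : Σ _ : Finset V, ℕ)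
    have hpq : p ≠ q := fun h =>
      hij (I.equivFin.symm.injective (Subtype.ext h))
    have hpB : p.1 ∈ B := ((hImem p).mp (I.equivFin.symm i).2).1
    have hqB : q.1 ∈ B := ((hImem q).mp (I.equivFin.symm j).2).1
    rcases hB.2 p.1 hpB q.1 hqB with ⟨v, hv1, hv2⟩ | ⟨a, ha, b, hb, hab⟩
    · refine ⟨(v, φ v p), Finset.mem_image_of_mem _ hv1,
        (v, φ v q), Finset.mem_image_of_mem _ hv2, ?_⟩
      apply (completeBlowup_adj G r _ _).mpr
      right
      refine ⟨rfl, fun h => hpq ?_⟩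
      exact hφinj v p q (Finset.mem_filter.mpr ⟨(I.equivFin.symm i).2, hv1⟩)
        (Finset.mem_filter.mpr ⟨(I.equivFin.symm j).2, hv2⟩) h
    · exact ⟨(a, φ a p), Finset.mem_image_of_mem _ ha,
        (b, φ b q), Finset.mem_image_of_mem _ hb,
        (completeBlowup_adj G r _ _).mpr (Or.inl hab)⟩
  · have h1 : (r : ℝ) * ∑ A ∈ B, w A = ∑ A ∈ B, ((K A : ℝ)) := by
      rw [Finset.mul_sum]
      apply Finset.sum_congr rfl
      intro A hA
      rw [hK A hA]
      field_simp
    have h2 : I.card = ∑ A ∈ B, K A := by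
      rw [hIdef, Finset.card_sigma]
      simp
    rw [h1, h2]
    push_cast
    rfl

end AuxBlowup

/-- `h(G[r]) = r · h_r(G)`. -/
theorem hadwiger_completeBlowup_eq
    {V : Type} [Fintype V] [DecidableEq V] (G : SimpleGraph V) (r : ℕ) (hr : 0 < r) :
    (hadwigerNumber (completeBlowup G r) : ℝ) = (r : ℝ) * rIntHadwiger G r := by
  classical
  set T : Set ℕ := {t | HasCliqueMinor (completeBlowup G r) t} with hTdef
  have hT0 : 0 ∈ T := ⟨fun i => i.elim0, fun i => i.elim0, fun i => i.elim0,
    fun i _ _ => i.elim0, fun i _ _ => i.elim0⟩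
  have hTbdd : BddAbove T := by
    refine ⟨Fintype.card (V × Fin r), ?_⟩
    intro t ht
    obtain ⟨f, hne, -, hdisj, -⟩ := ht
    have h1 : Fintype.card (Fin t) ≤ Fintype.card (V × Fin r) := by
      apply Fintype.card_le_of_injective (fun i => (hne i).choose)
      intro i j hij
      simp only at hij
      by_contra h
      exact Finset.disjoint_left.mp (hdisj i j h) (hne i).choose_spec
        (by rw [hij]; exact (hne j).choose_spec)
    simpa using h1
  set N : ℕ := hadwigerNumber (completeBlowup G r) with hNdef
  have hNT : N ∈ T := Nat.sSup_mem ⟨0, hT0⟩ hTbdd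
  have hNmax : ∀ t ∈ T, t ≤ N := fun t ht => le_csSup hTbdd ht
  set S : Set ℝ := {h : ℝ | ∃ B : Finset (Finset V), ∃ w : Finset V → ℝ,
    IsBramble G B ∧ IsValidWeight B w ∧ (∀ A ∈ B, ∃ k : ℕ, w A = k / r) ∧
    h = ∑ A ∈ B, w A} with hSdef
  have hrR : (0 : ℝ) < r := by exact_mod_cast hr
  have hle : ∀ h ∈ S, h ≤ (N : ℝ) / r := by
    rintro h ⟨B, w, hB, hw, hm, rfl⟩
    obtain ⟨t, ht, heq⟩ := bramble_to_blowup_minor G r hr B w hB hw hm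
    have htN : (t : ℝ) ≤ N := by exact_mod_cast hNmax t ht
    calc ∑ A ∈ B, w A = (r : ℝ)⁻¹ * ((r:ℝ) * ∑ A ∈ B, w A) := by
          rw [← mul_assoc, inv_mul_cancel₀ hrR.ne', one_mul]
      _ = (r:ℝ)⁻¹ * t := by rw [heq]
      _ ≤ (r : ℝ)⁻¹ * N := by
          apply mul_le_mul_of_nonneg_left htN (by positivity)
      _ = (N : ℝ) / r := by rw [div_eq_inv_mul]
  have hlo : (N : ℝ) / r ≤ sSup S := by
    obtain ⟨B, w, hB, hw, hm, heq⟩ := blowup_minor_to_bramble G r N hr hNT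
    have hmem : (∑ A ∈ B, w A) ∈ S := ⟨B, w, hB, hw, hm, rfl⟩
    have h2 : (N : ℝ) / r = ∑ A ∈ B, w A := by
      rw [heq]; field_simp
    rw [h2]
    exact le_csSup ⟨(N : ℝ) / r, hle⟩ hmem
  have hup : sSup S ≤ (N : ℝ) / r := by
    apply Real.sSup_le hle (by positivity)
  have hSsup : sSup S = (N : ℝ) / r := le_antisymm hup hlo
  have hS : rIntHadwiger G r = sSup S := rfl
  rw [hS, hSsup]
  field_simp
end

section
/- For every graph G and every positive integer r, the Hadwiger number of the complete blow-up satisfies h(G[r]) ≤ r · h_f(G). -/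
open Finset

open SimpleGraph in
lemma proj_connected {V : Type} [DecidableEq V] (G : SimpleGraph V) (r : ℕ)
    (X : Finset (V × Fin r))
    (hX : ((completeBlowup G r).induce (X : Set (V × Fin r))).Connected) :
    (G.induce ((X.image Prod.fst : Finset V) : Set V)).Connected := by
  set A := X.image Prod.fst with hA
  have hmem : ∀ u : (X : Set (V × Fin r)), u.val.1 ∈ (A : Set V) := by
    intro u
    simp only [hA, Finset.coe_image, Set.mem_image]
    exact ⟨u.val, u.2, rfl⟩
  have key : ∀ u v : (X : Set (V × Fin r)),
      ((completeBlowup G r).induce (X : Set (V × Fin r))).Walk u v →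
      (G.induce (A : Set V)).Reachable ⟨u.val.1, hmem u⟩ ⟨v.val.1, hmem v⟩ := by
    intro u v w
    induction w with
    | nil => exact SimpleGraph.Reachable.refl _
    | @cons a b c hab _ ih =>
      have hab' : (completeBlowup G r).Adj a.val b.val := hab
      rcases hab' with h | ⟨heq, _⟩
      · exact (SimpleGraph.Adj.reachable (by exact h :
          (G.induce (A : Set V)).Adj ⟨a.val.1, hmem a⟩ ⟨b.val.1, hmem b⟩)).trans ih
      · have : (⟨a.val.1, hmem a⟩ : (A : Set V)) = ⟨b.val.1, hmem b⟩ := Subtype.ext heq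
        rw [this]; exact ih
  rw [SimpleGraph.connected_iff]
  constructor
  · rintro ⟨a, ha⟩ ⟨b, hb⟩
    simp only [hA, Finset.coe_image, Set.mem_image] at ha hb
    obtain ⟨x, hx, rfl⟩ := ha
    obtain ⟨y, hy, rfl⟩ := hb
    exact (hX.preconnected ⟨x, hx⟩ ⟨y, hy⟩).elim fun w => key ⟨x, hx⟩ ⟨y, hy⟩ w
  · obtain ⟨⟨x, hx⟩⟩ := hX.nonempty
    exact ⟨⟨x.1, hmem ⟨x, hx⟩⟩⟩

lemma frac_set_bddAbove {V : Type} [Fintype V] [DecidableEq V] (G : SimpleGraph V) :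
    BddAbove {h : ℝ | ∃ B : Finset (Finset V), ∃ w : Finset V → ℝ,
      IsBramble G B ∧ IsValidWeight B w ∧ h = ∑ A ∈ B, w A} := by
  refine ⟨(Fintype.card V : ℝ), ?_⟩
  rintro h ⟨B, w, hbr, hval, rfl⟩
  have hstep : ∀ A ∈ B, w A ≤ w A * A.card := by
    intro A hA
    have hne : A.Nonempty := by
      have := (hbr.1 A hA).nonempty
      obtain ⟨⟨v, hv⟩⟩ := this
      exact ⟨v, hv⟩
    have h1 : (1 : ℝ) ≤ A.card := by exact_mod_cast Finset.card_pos.mpr hne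
    nlinarith [hval.1 A hA]
  calc ∑ A ∈ B, w A ≤ ∑ A ∈ B, w A * A.card := Finset.sum_le_sum hstep
    _ = ∑ A ∈ B, ∑ v : V, if v ∈ A then w A else 0 := by
        refine Finset.sum_congr rfl fun A _ => ?_
        rw [← Finset.sum_filter, Finset.filter_univ_mem, Finset.sum_const,
          nsmul_eq_mul, mul_comm]
    _ = ∑ v : V, ∑ A ∈ B, if v ∈ A then w A else 0 := Finset.sum_comm
    _ ≤ ∑ _v : V, (1 : ℝ) := by
        refine Finset.sum_le_sum fun v _ => ?_
        rw [← Finset.sum_filter]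
        exact hval.2 v
    _ = (Fintype.card V : ℝ) := by simp

lemma minor_div_le_frac {V : Type} [Fintype V] [DecidableEq V] (G : SimpleGraph V)
    (r : ℕ) (hr : 0 < r) (t : ℕ) (hm : HasCliqueMinor (completeBlowup G r) t) :
    (t : ℝ) / r ∈ {h : ℝ | ∃ B : Finset (Finset V), ∃ w : Finset V → ℝ,
      IsBramble G B ∧ IsValidWeight B w ∧ h = ∑ A ∈ B, w A} := by
  classical
  have hrR : (0 : ℝ) < r := by exact_mod_cast hr
  obtain ⟨f, hne, hconn, hdisj, hadj⟩ := hm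
  set g : Fin t → Finset V := fun i => (f i).image Prod.fst with hg
  set B : Finset (Finset V) := Finset.univ.image g with hBdef
  set w : Finset V → ℝ :=
    fun A => ((Finset.univ.filter (fun i => g i = A)).card : ℝ) / r with hw
  have hB : IsBramble G B := by
    constructor
    · intro A hA
      obtain ⟨i, -, rfl⟩ := Finset.mem_image.mp hA
      exact proj_connected G r (f i) (hconn i)
    · intro A hA A' hA'
      obtain ⟨i, -, rfl⟩ := Finset.mem_image.mp hA
      obtain ⟨j, -, rfl⟩ := Finset.mem_image.mp hA'
      by_cases hij : i = j
      · subst hij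
        obtain ⟨x, hx⟩ := hne i
        exact Or.inl ⟨x.1, Finset.mem_image_of_mem _ hx, Finset.mem_image_of_mem _ hx⟩
      · obtain ⟨a, ha, b, hb, hab⟩ := hadj i j hij
        have hab' : G.Adj a.1 b.1 ∨ (a.1 = b.1 ∧ (⊤ : SimpleGraph (Fin r)).Adj a.2 b.2) := hab
        rcases hab' with h | ⟨heq, -⟩
        · exact Or.inr ⟨a.1, Finset.mem_image_of_mem _ ha, b.1,
            Finset.mem_image_of_mem _ hb, h⟩
        · refine Or.inl ⟨a.1, Finset.mem_image_of_mem _ ha, ?_⟩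
          rw [heq]
          exact Finset.mem_image_of_mem _ hb
  have hfiber : ∀ v : V, (Finset.univ.filter (fun i : Fin t => v ∈ g i)).card ≤ r := by
    intro v
    set F := Finset.univ.filter (fun i : Fin t => v ∈ g i) with hF
    have hch : ∀ i ∈ F, ∃ p : Fin r, (v, p) ∈ f i := by
      intro i hi
      have := (Finset.mem_filter.mp hi).2
      obtain ⟨x, hx, hx'⟩ := Finset.mem_image.mp this
      exact ⟨x.2, by rwa [show (v, x.2) = x from Prod.ext hx'.symm rfl]⟩
    have hle : F.card ≤ (Finset.univ : Finset (Fin r)).card := by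
      refine Finset.card_le_card_of_injOn
        (fun i => if h : ∃ p : Fin r, (v, p) ∈ f i then h.choose else ⟨0, hr⟩)
        (fun _ _ => Finset.mem_univ _) ?_
      intro i hi j hj hijeq
      by_contra hij
      have hi' := hch i (Finset.mem_coe.mp hi)
      have hj' := hch j (Finset.mem_coe.mp hj)
      have hijeq' : (if h : ∃ p : Fin r, (v, p) ∈ f i then h.choose else ⟨0, hr⟩)
          = (if h : ∃ p : Fin r, (v, p) ∈ f j then h.choose else ⟨0, hr⟩) := hijeq
      rw [dif_pos hi', dif_pos hj'] at hijeq'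
      refine Finset.disjoint_left.mp (hdisj i j hij) hi'.choose_spec ?_
      rw [show ((v, hi'.choose) : V × Fin r) = (v, hj'.choose) by rw [hijeq']]
      exact hj'.choose_spec
    simpa using hle
  have hvert : ∀ v : V, ∑ A ∈ B.filter (fun A => v ∈ A), w A ≤ 1 := by
    intro v
    set Bv := B.filter (fun A => v ∈ A) with hBv
    set F := Finset.univ.filter (fun i : Fin t => v ∈ g i) with hF
    have hcard : F.card = ∑ A ∈ Bv, (F.filter (fun i => g i = A)).card := by
      refine Finset.card_eq_sum_card_fiberwise fun i hi => ?_
      exact Finset.mem_filter.mpr ⟨Finset.mem_image.mpr ⟨i, Finset.mem_univ i, rfl⟩,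
        (Finset.mem_filter.mp hi).2⟩
    have hfil : ∀ A ∈ Bv, Finset.univ.filter (fun i => g i = A)
        = F.filter (fun i => g i = A) := by
      intro A hA
      ext i
      simp only [hF, Finset.mem_filter, Finset.mem_univ, true_and]
      constructor
      · intro h
        exact ⟨h ▸ (Finset.mem_filter.mp hA).2, h⟩
      · exact fun h => h.2
    have heq : ∑ A ∈ Bv, w A = (F.card : ℝ) / r := by
      rw [hcard]
      push_cast
      rw [Finset.sum_div]
      refine Finset.sum_congr rfl fun A hA => ?_
      show ((Finset.filter (fun i => g i = A) Finset.univ).card : ℝ) / r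
        = ((Finset.filter (fun i => g i = A) F).card : ℝ) / r
      rw [hfil A hA]
    rw [heq, div_le_one hrR]
    exact_mod_cast hfiber v
  have htot : ∑ A ∈ B, w A = (t : ℝ) / r := by
    have hc : (Finset.univ : Finset (Fin t)).card
        = ∑ A ∈ B, (Finset.univ.filter (fun i => g i = A)).card :=
      Finset.card_eq_sum_card_fiberwise fun i _ =>
        Finset.mem_image.mpr ⟨i, Finset.mem_univ i, rfl⟩
    have heq : ∑ A ∈ B, w A
        = ((∑ A ∈ B, (Finset.univ.filter (fun i => g i = A)).card : ℕ) : ℝ) / r := by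
      push_cast
      rw [Finset.sum_div]
    rw [heq, ← hc, Finset.card_univ, Fintype.card_fin]
  exact ⟨B, w, hB, ⟨fun A _ => div_nonneg (Nat.cast_nonneg _) hrR.le, hvert⟩, htot.symm⟩

/-- `h(G[r]) ≤ r · h_f(G)`. -/
theorem hadwiger_completeBlowup_le
    {V : Type} [Fintype V] [DecidableEq V] (G : SimpleGraph V) (r : ℕ) (hr : 0 < r) :
    (hadwigerNumber (completeBlowup G r) : ℝ) ≤ (r : ℝ) * fracHadwiger G := by
  classical
  have hrR : (0 : ℝ) < r := by exact_mod_cast hr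
  set S : Set ℕ := {t | HasCliqueMinor (completeBlowup G r) t} with hS
  have h0 : 0 ∈ S := ⟨Fin.elim0, fun i => i.elim0, fun i => i.elim0,
    fun i => i.elim0, fun i => i.elim0⟩
  have hbddS : BddAbove S := by
    refine ⟨Fintype.card (V × Fin r), ?_⟩
    rintro t ⟨f, hne, hconn, hdisj, hadj⟩
    have hinj : Function.Injective (fun i : Fin t => (hne i).choose) := by
      intro i j hij
      have hij' : (hne i).choose = (hne j).choose := hij
      by_contra hij''
      exact Finset.disjoint_left.mp (hdisj i j hij'') (hne i).choose_spec
        (hij' ▸ (hne j).choose_spec)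
    calc t = Fintype.card (Fin t) := (Fintype.card_fin t).symm
      _ ≤ _ := Fintype.card_le_of_injective _ hinj
  have hmem : sSup S ∈ S := Nat.sSup_mem ⟨0, h0⟩ hbddS
  have hHN : hadwigerNumber (completeBlowup G r) = sSup S := rfl
  have hle := le_csSup (frac_set_bddAbove G) (minor_div_le_frac G r hr (sSup S) hmem)
  have hfrac : fracHadwiger G = sSup {h : ℝ | ∃ B : Finset (Finset V), ∃ w : Finset V → ℝ,
      IsBramble G B ∧ IsValidWeight B w ∧ h = ∑ A ∈ B, w A} := rfl
  rw [hHN, hfrac]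
  rw [div_le_iff₀ hrR] at hle
  calc ((sSup S : ℕ) : ℝ) ≤ _ * r := hle
    _ = (r : ℝ) * _ := mul_comm _ _
end

section
/- Let G be a graph on n vertices, let d be a positive integer, and suppose that every clique minor in G of breadth at most d has order at most s. Then the fractional Hadwiger number satisfies h_f(G) ≤ n/d + d·s. -/
open Finset

lemma bramble_mem_nonempty {V : Type} {G : SimpleGraph V} {A : Finset V}
    (h : (G.induce (A : Set V)).Connected) : A.Nonempty := by
  obtain ⟨⟨v, hv⟩⟩ := h.nonempty
  exact ⟨v, hv⟩

lemma cover_sum {α ι : Type*} (S : Finset α) (I : Finset ι) (w : α → ℝ)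
    (R : α → ι → Prop) [∀ A i, Decidable (R A i)]
    (hw : ∀ A ∈ S, 0 ≤ w A) (hcov : ∀ A ∈ S, ∃ i ∈ I, R A i) :
    ∑ A ∈ S, w A ≤ ∑ i ∈ I, ∑ A ∈ S.filter (fun A => R A i), w A := by
  have key : ∑ i ∈ I, ∑ A ∈ S.filter (fun A => R A i), w A
      = ∑ A ∈ S, ((I.filter (fun i => R A i)).card : ℝ) * w A := by
    simp_rw [Finset.sum_filter]
    rw [Finset.sum_comm]
    refine Finset.sum_congr rfl fun A _ => ?_
    rw [← Finset.sum_filter, Finset.sum_const, nsmul_eq_mul]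
  rw [key]
  refine Finset.sum_le_sum fun A hA => ?_
  refine le_mul_of_one_le_left (hw A hA) ?_
  have : 0 < (I.filter (fun i => R A i)).card := by
    obtain ⟨i, hi, hRi⟩ := hcov A hA
    exact Finset.card_pos.mpr ⟨i, Finset.mem_filter.mpr ⟨hi, hRi⟩⟩
  exact_mod_cast this

/-- if every clique minor in `G` of breadth at most `d` has order at most `s`,
then `h_f(G) ≤ n/d + d·s`. -/
theorem fracHadwiger_le_of_breadth_bound
    {V : Type} [Fintype V] [DecidableEq V] (G : SimpleGraph V)
    (d : ℕ) (hd : 0 < d) (s : ℕ)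
    (hs : ∀ t : ℕ, HasCliqueMinorBreadth G t (d : ℝ) → t ≤ s) :
    fracHadwiger G ≤ (Fintype.card V : ℝ) / (d : ℝ) + (d : ℝ) * (s : ℝ) := by
  have hbound0 : (0:ℝ) ≤ (Fintype.card V : ℝ) / (d : ℝ) + (d : ℝ) * (s : ℝ) := by
    positivity
  refine Real.sSup_le ?_ hbound0
  rintro h ⟨B, w, ⟨hconn, hpair⟩, ⟨hw0, hw1⟩, rfl⟩
  have hdpos : (0:ℝ) < d := by exact_mod_cast hd
  have hne : ∀ A ∈ B, A.Nonempty := fun A hA => bramble_mem_nonempty (hconn A hA)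
  -- split
  classical
  set p : Finset V → Prop := fun A => A.card ≤ d with hp
  rw [← Finset.sum_filter_add_sum_filter_not B p w]
  -- big sets bound
  have hdouble : ∑ A ∈ B, (A.card : ℝ) * w A ≤ (Fintype.card V : ℝ) := by
    have e1 : ∑ A ∈ B, (A.card : ℝ) * w A
        = ∑ v : V, ∑ A ∈ B.filter (fun A => v ∈ A), w A := by
      simp_rw [Finset.sum_filter]
      rw [Finset.sum_comm]
      refine Finset.sum_congr rfl fun A _ => ?_
      rw [← Finset.sum_filter]
      have hAeq : Finset.univ.filter (fun v => v ∈ A) = A := by ext v; simp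
      rw [hAeq, Finset.sum_const, nsmul_eq_mul]
    rw [e1]
    calc ∑ v : V, ∑ A ∈ B.filter (fun A => v ∈ A), w A
        ≤ ∑ _v : V, (1:ℝ) := Finset.sum_le_sum fun v _ => hw1 v
      _ = (Fintype.card V : ℝ) := by simp
  have hbig : ∑ A ∈ B.filter (fun A => ¬ p A), w A ≤ (Fintype.card V : ℝ) / d := by
    rw [le_div_iff₀ hdpos]
    calc (∑ A ∈ B.filter (fun A => ¬ p A), w A) * d
        = ∑ A ∈ B.filter (fun A => ¬ p A), (d:ℝ) * w A := by
          rw [Finset.sum_mul]; exact Finset.sum_congr rfl fun A _ => mul_comm _ _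
      _ ≤ ∑ A ∈ B.filter (fun A => ¬ p A), (A.card : ℝ) * w A := by
          refine Finset.sum_le_sum fun A hA => ?_
          obtain ⟨hAB, hAcard⟩ := Finset.mem_filter.mp hA
          have : (d:ℝ) ≤ (A.card : ℝ) := by
            have : d < A.card := by simpa [hp] using hAcard
            exact_mod_cast this.le
          exact mul_le_mul_of_nonneg_right this (hw0 A hAB)
      _ ≤ ∑ A ∈ B, (A.card : ℝ) * w A := by
          refine Finset.sum_le_sum_of_subset_of_nonneg (Finset.filter_subset _ _) ?_
          intro A hA _
          exact mul_nonneg (by positivity) (hw0 A hA)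
      _ ≤ (Fintype.card V : ℝ) := hdouble
  -- small sets bound
  set S : Finset (Finset V) := B.filter (fun A => p A) with hS
  -- maximal pairwise disjoint subfamily of S
  have hTne : (S.powerset.filter
      (fun T => ∀ A ∈ T, ∀ A' ∈ T, A ≠ A' → Disjoint A A')).Nonempty := by
    exact ⟨∅, by simp⟩
  obtain ⟨T, hTmem, hTmax⟩ := Finset.exists_max_image _ Finset.card hTne
  obtain ⟨hTsub, hTdisj⟩ := Finset.mem_filter.mp hTmem
  rw [Finset.mem_powerset] at hTsub
  -- cover property
  have hcov : ∀ A ∈ S, ∃ C ∈ T, ¬ Disjoint A C := by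
    intro A hAS
    by_contra hcon
    push_neg at hcon
    have hAnotT : A ∉ T := by
      intro hAT
      have := hcon A hAT
      rw [disjoint_self] at this
      exact (hne A (Finset.mem_filter.mp hAS).1).ne_empty (by simpa using this)
    have hins : insert A T ∈ S.powerset.filter
        (fun T => ∀ A ∈ T, ∀ A' ∈ T, A ≠ A' → Disjoint A A') := by
      rw [Finset.mem_filter, Finset.mem_powerset]
      constructor
      · exact Finset.insert_subset hAS hTsub
      · intro X hX Y hY hXY
        rcases Finset.mem_insert.mp hX with hXA | hXT
        · rcases Finset.mem_insert.mp hY with hYA | hYT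
          · exact absurd (hXA.trans hYA.symm) hXY
          · rw [hXA]; exact hcon Y hYT
        · rcases Finset.mem_insert.mp hY with hYA | hYT
          · rw [hYA]; exact (hcon X hXT).symm
          · exact hTdisj X hXT Y hYT hXY
    have := hTmax _ hins
    rw [Finset.card_insert_of_notMem hAnotT] at this
    omega
  -- T gives a clique minor of breadth ≤ d
  have hTcard : T.card ≤ s := by
    refine hs T.card ?_
    refine ⟨fun i => (T.equivFin.symm i : Finset V), ?_, ?_, ?_, ?_, ?_⟩
    · intro i
      exact hne _ ((Finset.filter_subset _ _) (hTsub (T.equivFin.symm i).2))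
    · intro i
      exact hconn _ ((Finset.filter_subset _ _) (hTsub (T.equivFin.symm i).2))
    · intro i j hij
      refine hTdisj _ (T.equivFin.symm i).2 _ (T.equivFin.symm j).2 ?_
      intro hEq
      exact hij (T.equivFin.symm.injective (Subtype.ext hEq))
    · intro i j hij
      have hAi := (Finset.filter_subset _ _) (hTsub (T.equivFin.symm i).2)
      have hAj := (Finset.filter_subset _ _) (hTsub (T.equivFin.symm j).2)
      rcases hpair _ hAi _ hAj with ⟨v, hv1, hv2⟩ | hedge
      · exfalso
        have hdisj := hTdisj _ (T.equivFin.symm i).2 _ (T.equivFin.symm j).2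
          (fun hEq => hij (T.equivFin.symm.injective (Subtype.ext hEq)))
        exact (Finset.disjoint_left.mp hdisj hv1) hv2
      · exact hedge
    · intro i
      have := (Finset.mem_filter.mp (hTsub (T.equivFin.symm i).2)).2
      exact_mod_cast this
  have hsmall : ∑ A ∈ S, w A ≤ (d : ℝ) * s := by
    have hw0' : ∀ A ∈ S, 0 ≤ w A := fun A hA => hw0 A (Finset.mem_filter.mp hA).1
    calc ∑ A ∈ S, w A
        ≤ ∑ C ∈ T, ∑ A ∈ S.filter (fun A => ¬ Disjoint A C), w A :=
          cover_sum S T w (fun A C => ¬ Disjoint A C) hw0' hcov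
      _ ≤ ∑ _C ∈ T, (d : ℝ) := by
          refine Finset.sum_le_sum fun C hC => ?_
          have hCS := hTsub hC
          have hCcard : (C.card : ℝ) ≤ d := by
            exact_mod_cast (Finset.mem_filter.mp hCS).2
          calc ∑ A ∈ S.filter (fun A => ¬ Disjoint A C), w A
              ≤ ∑ v ∈ C, ∑ A ∈ (S.filter (fun A => ¬ Disjoint A C)).filter
                  (fun A => v ∈ A), w A := by
                refine cover_sum _ C w (fun A v => v ∈ A)
                  (fun A hA => hw0' A (Finset.mem_filter.mp hA).1) ?_
                intro A hA
                obtain ⟨v, hvA, hvC⟩ := Finset.not_disjoint_iff.mp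
                  (Finset.mem_filter.mp hA).2
                exact ⟨v, hvC, hvA⟩
            _ ≤ ∑ _v ∈ C, (1:ℝ) := by
                refine Finset.sum_le_sum fun v _ => ?_
                refine le_trans (Finset.sum_le_sum_of_subset_of_nonneg ?_ ?_) (hw1 v)
                · intro A hA
                  rw [Finset.mem_filter] at hA ⊢
                  exact ⟨(Finset.mem_filter.mp (Finset.mem_filter.mp hA.1).1).1, hA.2⟩
                · intro A hA _
                  exact hw0 A (Finset.mem_filter.mp hA).1
            _ = (C.card : ℝ) := by simp
            _ ≤ (d : ℝ) := hCcard
      _ = (T.card : ℝ) * d := by simp [mul_comm]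
      _ ≤ (s : ℝ) * d := by
          exact mul_le_mul_of_nonneg_right (by exact_mod_cast hTcard) hdpos.le
      _ = (d : ℝ) * s := mul_comm _ _
  calc ∑ A ∈ B.filter (fun A => p A), w A + ∑ A ∈ B.filter (fun A => ¬ p A), w A
      ≤ (d : ℝ) * s + (Fintype.card V : ℝ) / d := add_le_add hsmall hbig
    _ = (Fintype.card V : ℝ) / (d : ℝ) + (d : ℝ) * (s : ℝ) := add_comm _ _
end
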